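/- Let m ≥ 1 and let z₁ ≥ z₂ ≥ ... ≥ z_m be reals. Let J be a nonempty random subset of {1,...,m} whose distribution is invariant under permutations conditioned on its size (e.g., a uniformly random subset of each possible size), and let i* = max(J) be its largest element. Then E[z_{i*}] ≤ E_{i ∼ Uniform{1,...,m}}[z_i] whenever J is a uniformly random nonempty subset of fixed size q ≥ 1. -/

import Mathlib

open Finset

lemma sum_powersetCard_sup (r : ℕ) (f : ℕ → ℝ) :
    ∀ m : ℕ, (∑ J ∈ (Finset.range m).powersetCard (r + 1), f (J.sup id))
      = ∑ k ∈ Finset.range m, (k.choose r : ℝ) * f k := by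
  intro m
  induction m with
  | zero =>
    rw [Finset.range_zero, Finset.powersetCard_eq_empty.mpr (by simp)]
    simp
  | succ m ih =>
    rw [Finset.range_add_one, Finset.powersetCard_succ_insert (Finset.notMem_range_self)]
    rw [Finset.sum_union, Finset.sum_image]
    · have h1 : ∀ J ∈ (Finset.range m).powersetCard r, f ((insert m J).sup id) = f m := by
        intro J hJ
        rw [Finset.mem_powersetCard] at hJ
        have : (insert m J).sup id = m := by
          rw [Finset.sup_insert]
          have : J.sup id ≤ m := Finset.sup_le fun b hb => le_of_lt
            (Finset.mem_range.mp (hJ.1 hb))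
          simpa [id] using this
        rw [this]
      rw [Finset.sum_congr rfl h1, Finset.sum_const, Finset.card_powersetCard,
        Finset.card_range, ih, Finset.sum_insert Finset.notMem_range_self, nsmul_eq_mul]
      ring
    · intro a ha b hb hab
      rw [Finset.mem_coe, Finset.mem_powersetCard] at ha hb
      have ham : m ∉ a := fun h => (Finset.mem_range.mp (ha.1 h)).false
      have hbm : m ∉ b := fun h => (Finset.mem_range.mp (hb.1 h)).false
      have := congrArg (fun s => Finset.erase s m) hab
      simpa [Finset.erase_insert, ham, hbm] using this
    · rw [Finset.disjoint_left]
      intro J hJ hJ'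
      rw [Finset.mem_powersetCard] at hJ
      have : m ∉ J := fun h => (Finset.mem_range.mp (hJ.1 h)).false
      obtain ⟨K, hK, rfl⟩ := Finset.mem_image.mp hJ'
      exact this (Finset.mem_insert_self m K)

/-- Let `m ≥ 1` and `z 0 ≥ z 1 ≥ ...` be reals (nonincreasing in the index).  For a uniformly
random `q`-element subset `J` of `{0,...,m-1}` with `1 ≤ q ≤ m`, the expectation of
`z (max J)` is at most the expectation of `z i` for a uniform index `i`. -/
theorem expected_max_index_le_uniform (m q : ℕ) (hm : 1 ≤ m) (hq : 1 ≤ q) (hqm : q ≤ m)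
    (z : ℕ → ℝ) (hz : ∀ i j, i ≤ j → z j ≤ z i) :
    (∑ J ∈ (Finset.range m).powersetCard q, z (J.sup id))
        / (((Finset.range m).powersetCard q).card : ℝ)
      ≤ (∑ i ∈ Finset.range m, z i) / (m : ℝ) := by
  obtain ⟨r, rfl⟩ : ∃ r, q = r + 1 := ⟨q - 1, (Nat.succ_pred_eq_of_pos hq).symm⟩
  have hcard : (((Finset.range m).powersetCard (r + 1)).card : ℝ)
      = ∑ k ∈ Finset.range m, (k.choose r : ℝ) := by
    have := sum_powersetCard_sup r (fun _ => (1 : ℝ)) m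
    simpa [Finset.card_powersetCard, Finset.card_range, mul_one] using this
  have hpos : (0 : ℝ) < (((Finset.range m).powersetCard (r + 1)).card : ℝ) := by
    have : 0 < m.choose (r + 1) := Nat.choose_pos hqm
    simp [Finset.card_powersetCard, Finset.card_range]
    exact_mod_cast this
  have hmpos : (0 : ℝ) < (m : ℝ) := by exact_mod_cast hm
  rw [sum_powersetCard_sup, div_le_div_iff₀ hpos hmpos, hcard]
  have hanti : AntivaryOn (fun k : ℕ => (k.choose r : ℝ)) z (Finset.range m) := by
    intro i _ j _ hij
    have hji : j ≤ i := by
      by_contra h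
      exact absurd (hz i j (le_of_not_ge h)) (not_le.mpr hij)
    exact Nat.cast_le.mpr (Nat.choose_le_choose r hji)
  have := hanti.card_mul_sum_le_sum_mul_sum
  rw [Finset.card_range] at this
  calc (∑ k ∈ Finset.range m, (k.choose r : ℝ) * z k) * (m : ℝ)
      = (m : ℝ) * ∑ k ∈ Finset.range m, (k.choose r : ℝ) * z k := by ring
    _ ≤ (∑ k ∈ Finset.range m, (k.choose r : ℝ)) * ∑ i ∈ Finset.range m, z i := this
    _ = (∑ i ∈ Finset.range m, z i) * ∑ k ∈ Finset.range m, (k.choose r : ℝ) := by ring
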